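/- Uniform upper tail property for the non-uniform hypergraph adjacency matrix: let A be as in the context. Then for any reals a, t > 0 and any symmetric matrix Q ∈ ℝ^{n×n} with Q_{ij} ∈ [0, a] for all i, j, setting μ := Σ_{i,j=1}^n Q_{ij}·EA_{ij} and σ̃² := Σ_{i,j=1}^n Q_{ij}²·EA_{ij}, if σ̃² > 0 then ℙ( Σ_{i,j=1}^n Q_{ij} A_{ij} ≥ μ + t ) ≤ exp( − (σ̃² / (M(M−1)·a²)) · h( a·t / σ̃² ) ), where h(x) := (1+x)·log(1+x) − x. That is, A satisfies UUTP(c₀, γ₀) with c₀ = 1/(M(M−1)) and γ₀ = 0. -/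

import Mathlib

open MeasureTheory

lemma exp_sub_expand (x : ℝ) :
    Real.exp x - 1 - x = ∑' n : ℕ, x ^ (n + 2) / (n + 2).factorial := by
  have h1 : Real.exp x = ∑' n : ℕ, x ^ n / n.factorial := by
    rw [Real.exp_eq_exp_ℝ, NormedSpace.exp_eq_tsum_div]
  rw [Summable.tsum_eq_zero_add (Real.summable_pow_div_factorial x)] at h1
  rw [Summable.tsum_eq_zero_add (((Real.summable_pow_div_factorial x).comp_injective
      (add_left_injective 1)).congr (fun n => by simp [Function.comp]))] at h1
  norm_num at h1
  have h2 : ∀ n : ℕ, n + 1 + 1 = n + 2 := fun n => rfl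
  simp only [h2] at h1
  rw [h1]; ring

lemma summable_shift (x : ℝ) : Summable (fun n : ℕ => x ^ (n + 2) / (n + 2).factorial) := by
  have := (Real.summable_pow_div_factorial x).comp_injective (add_left_injective 2)
  simpa [Function.comp_def] using this

lemma key_ineq {y z : ℝ} (hy : 0 ≤ y) (hyz : y ≤ z) :
    Real.exp y - 1 - y ≤ y ^ 2 / z ^ 2 * (Real.exp z - 1 - z) := by
  rcases eq_or_lt_of_le (hy.trans hyz) with hz | hz
  · have : y = 0 := le_antisymm (hyz.trans hz.symm.le) hy
    simp [this, ← hz]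
  · rw [exp_sub_expand y, exp_sub_expand z, ← tsum_mul_left]
    refine Summable.tsum_le_tsum (fun n => ?_) (summable_shift y) ((summable_shift z).mul_left _)
    have hfac : (0:ℝ) < (n + 2).factorial := by positivity
    have hz2 : (0:ℝ) < z ^ 2 := by positivity
    have h : y ^ (n + 2) ≤ y ^ 2 / z ^ 2 * z ^ (n + 2) := by
      rw [div_mul_eq_mul_div, le_div_iff₀ hz2]
      calc y ^ (n + 2) * z ^ 2 = y ^ 2 * y ^ n * z ^ 2 := by ring
        _ ≤ y ^ 2 * z ^ n * z ^ 2 := by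
            have h2 := pow_le_pow_left₀ hy hyz n
            have h3 : (0:ℝ) ≤ y ^ 2 * z ^ 2 := by positivity
            nlinarith [pow_nonneg hy n]
        _ = y ^ 2 * z ^ (n + 2) := by ring
    rw [mul_div_assoc']
    exact div_le_div_of_nonneg_right h hfac.le |>.trans_eq rfl

lemma offdiag_sum {n : ℕ} (e : Finset (Fin n)) (F : Fin n → Fin n → ℝ) :
    ∑ q ∈ e.offDiag, F q.1 q.2 = ∑ i, ∑ j, if i ∈ e ∧ j ∈ e ∧ i ≠ j then F i j else 0 := by
  rw [← Finset.sum_product' (s := Finset.univ) (t := Finset.univ)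
    (f := fun i j => if i ∈ e ∧ j ∈ e ∧ i ≠ j then F i j else 0),
    Finset.univ_product_univ, ← Finset.sum_filter]
  congr 1
  ext q
  simp [Finset.mem_offDiag]

lemma sum_rewrite (n M : ℕ) (R : Fin n → Fin n → ℝ) (g : Finset (Fin n) → ℝ) :
    ∑ i, ∑ j, R i j * (if i = j then (0:ℝ) else ∑ m ∈ Finset.Icc 2 M,
      ∑ e ∈ Finset.univ.filter (fun e : Finset (Fin n) => e.card = m ∧ i ∈ e ∧ j ∈ e), g e)
    = ∑ e ∈ Finset.univ.filter (fun e : Finset (Fin n) => e.card ∈ Finset.Icc 2 M),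
        (∑ q ∈ e.offDiag, R q.1 q.2) * g e := by
  have key : ∀ i j : Fin n, R i j * (if i = j then (0:ℝ) else ∑ m ∈ Finset.Icc 2 M,
      ∑ e ∈ Finset.univ.filter (fun e : Finset (Fin n) => e.card = m ∧ i ∈ e ∧ j ∈ e), g e)
      = ∑ e ∈ Finset.univ.filter (fun e : Finset (Fin n) => e.card ∈ Finset.Icc 2 M),
          (if i ∈ e ∧ j ∈ e ∧ i ≠ j then R i j * g e else 0) := by
    intro i j
    rcases eq_or_ne i j with rfl | hij
    · simp
    · rw [if_neg hij]
      simp only [Finset.sum_filter, Finset.mem_univ, hij, ne_eq, not_false_iff, and_true,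
        true_and]
      simp only [Finset.mul_sum, mul_ite, mul_zero]
      rw [Finset.sum_comm]
      refine Finset.sum_congr rfl fun a _ => ?_
      simp only [ite_and]
      rw [Finset.sum_ite_eq]
  have step1 : (∑ i, ∑ j, R i j * (if i = j then (0:ℝ) else ∑ m ∈ Finset.Icc 2 M,
      ∑ e ∈ Finset.univ.filter (fun e : Finset (Fin n) => e.card = m ∧ i ∈ e ∧ j ∈ e), g e))
      = ∑ i, ∑ j, ∑ e ∈ Finset.univ.filter
          (fun e : Finset (Fin n) => e.card ∈ Finset.Icc 2 M),
          (if i ∈ e ∧ j ∈ e ∧ i ≠ j then R i j * g e else 0) :=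
    Finset.sum_congr rfl fun i _ => Finset.sum_congr rfl fun j _ => key i j
  rw [step1]
  rw [show (∑ i, ∑ j, ∑ e ∈ Finset.univ.filter
      (fun e : Finset (Fin n) => e.card ∈ Finset.Icc 2 M),
      (if i ∈ e ∧ j ∈ e ∧ i ≠ j then R i j * g e else 0))
      = ∑ e ∈ Finset.univ.filter (fun e : Finset (Fin n) => e.card ∈ Finset.Icc 2 M),
        ∑ i, ∑ j, (if i ∈ e ∧ j ∈ e ∧ i ≠ j then R i j * g e else 0) from by
    calc (∑ i, ∑ j, ∑ e ∈ Finset.univ.filter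
        (fun e : Finset (Fin n) => e.card ∈ Finset.Icc 2 M),
        (if i ∈ e ∧ j ∈ e ∧ i ≠ j then R i j * g e else 0))
        = ∑ i, ∑ e ∈ Finset.univ.filter
          (fun e : Finset (Fin n) => e.card ∈ Finset.Icc 2 M),
          ∑ j, (if i ∈ e ∧ j ∈ e ∧ i ≠ j then R i j * g e else 0) :=
        Finset.sum_congr rfl fun i _ => Finset.sum_comm
      _ = _ := Finset.sum_comm]
  refine Finset.sum_congr rfl fun e _ => ?_
  rw [Finset.sum_mul]
  exact (offdiag_sum e fun i j => R i j * g e).symm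

/-- The adjacency matrix of the random non-uniform hypergraph with edge indicators `T`. -/
noncomputable def adjMatrix (n M : ℕ) {Ω : Type*} (T : Finset (Fin n) → Ω → Bool) (ω : Ω) :
    Matrix (Fin n) (Fin n) ℝ :=
  Matrix.of fun i j => if i = j then 0 else
    ∑ m ∈ Finset.Icc 2 M, ∑ e ∈ Finset.univ.filter
      (fun e : Finset (Fin n) => e.card = m ∧ i ∈ e ∧ j ∈ e),
        (if T e ω then (1 : ℝ) else 0)

/-- The entrywise expectation of the adjacency matrix, for edge probabilities `p`. -/
noncomputable def expAdj (n M : ℕ) (p : Finset (Fin n) → ℝ) : Matrix (Fin n) (Fin n) ℝ :=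
  Matrix.of fun i j => if i = j then 0 else
    ∑ m ∈ Finset.Icc 2 M, ∑ e ∈ Finset.univ.filter
      (fun e : Finset (Fin n) => e.card = m ∧ i ∈ e ∧ j ∈ e), p e

/-- The function `h(x) = (1+x)·log(1+x) - x` from Bennett's inequality. -/
noncomputable def bennettH (x : ℝ) : ℝ := (1 + x) * Real.log (1 + x) - x

set_option maxHeartbeats 1000000 in
/-- The adjacency matrix of a random non-uniform hypergraph satisfies the uniform
upper tail property `UUTP(1/(M(M-1)), 0)`. -/
theorem adjacency_uutp
    {Ω : Type*} [MeasurableSpace Ω] (μ : Measure Ω) [IsProbabilityMeasure μ]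
    (n M : ℕ) (hn : 2 ≤ n) (hM : 2 ≤ M)
    (T : Finset (Fin n) → Ω → Bool) (hTmeas : ∀ e, Measurable (T e))
    (hTindep : ProbabilityTheory.iIndepFun T μ)
    (p : Finset (Fin n) → ℝ) (hp0 : ∀ e, 0 ≤ p e)
    (hpT : ∀ e, μ {ω | T e ω = true} = ENNReal.ofReal (p e))
    (dm : ℕ → ℝ) (hdm : ∀ m, 0 ≤ dm m)
    (hpbound : ∀ e : Finset (Fin n), e.card ∈ Finset.Icc 2 M →
      p e ≤ dm e.card / (n.choose (e.card - 1)))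
    (a t : ℝ) (ha : 0 < a) (ht : 0 < t)
    (Q : Matrix (Fin n) (Fin n) ℝ) (hQsymm : Q.IsSymm)
    (hQ : ∀ i j, 0 ≤ Q i j ∧ Q i j ≤ a)
    (hσ : 0 < ∑ i, ∑ j, (Q i j) ^ 2 * expAdj n M p i j) :
    μ {ω | (∑ i, ∑ j, Q i j * expAdj n M p i j) + t ≤
        ∑ i, ∑ j, Q i j * adjMatrix n M T ω i j} ≤
      ENNReal.ofReal (Real.exp
        (-(((∑ i, ∑ j, (Q i j) ^ 2 * expAdj n M p i j) / (M * ((M : ℝ) - 1) * a ^ 2)) *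
          bennettH (a * t / ∑ i, ∑ j, (Q i j) ^ 2 * expAdj n M p i j)))) := by
  classical
  set E : Finset (Finset (Fin n)) :=
    Finset.univ.filter (fun e : Finset (Fin n) => e.card ∈ Finset.Icc 2 M) with hEdef
  set w : Finset (Fin n) → ℝ := fun e => ∑ q ∈ e.offDiag, Q q.1 q.2 with hwdef
  set v : Finset (Fin n) → ℝ := fun e => ∑ q ∈ e.offDiag, (Q q.1 q.2) ^ 2 with hvdef
  -- rewriting the three quadratic forms as sums over edges
  have hμeq : (∑ i, ∑ j, Q i j * expAdj n M p i j) = ∑ e ∈ E, w e * p e := by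
    simpa only [expAdj, Matrix.of_apply] using sum_rewrite n M (fun i j => Q i j) p
  have hVeq : (∑ i, ∑ j, (Q i j) ^ 2 * expAdj n M p i j) = ∑ e ∈ E, v e * p e := by
    simpa only [expAdj, Matrix.of_apply] using sum_rewrite n M (fun i j => (Q i j) ^ 2) p
  have hAeq : ∀ ω, (∑ i, ∑ j, Q i j * adjMatrix n M T ω i j)
      = ∑ e ∈ E, w e * (if T e ω then (1:ℝ) else 0) := by
    intro ω
    simpa only [adjMatrix, Matrix.of_apply] using
      sum_rewrite n M (fun i j => Q i j) (fun e => if T e ω then (1:ℝ) else 0)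
  -- basic facts
  have hM2 : (2:ℝ) ≤ (M:ℝ) := by exact_mod_cast hM
  set K : ℝ := (M:ℝ) * ((M:ℝ) - 1) with hKdef
  have hK : 0 < K := by nlinarith
  set b : ℝ := K * a with hbdef
  have hb : 0 < b := mul_pos hK ha
  have hw0 : ∀ e, 0 ≤ w e := fun e => Finset.sum_nonneg fun q _ => (hQ q.1 q.2).1
  have hv0 : ∀ e, 0 ≤ v e := fun e => Finset.sum_nonneg fun q _ => sq_nonneg _
  have hcardE : ∀ e ∈ E, ((e.offDiag.card : ℝ)) ≤ K := by
    intro e he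
    have hcM : e.card ≤ M := (Finset.mem_Icc.1 (Finset.mem_filter.1 he).2).2
    have hcc : e.card ≤ e.card * e.card := by
      rcases Nat.eq_zero_or_pos e.card with h | h
      · simp [h]
      · exact Nat.le_mul_of_pos_left e.card h
    rw [Finset.offDiag_card]
    have hcMr : ((e.card : ℝ)) ≤ (M:ℝ) := by exact_mod_cast hcM
    have h0c : (0:ℝ) ≤ (e.card : ℝ) := by positivity
    rw [Nat.cast_sub hcc]
    push_cast
    nlinarith [mul_nonneg (sub_nonneg.2 hcMr) (by linarith : (0:ℝ) ≤ (M:ℝ) + (e.card:ℝ) - 1)]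
  have hwK : ∀ e ∈ E, w e ≤ b := by
    intro e he
    calc w e ≤ ∑ _q ∈ e.offDiag, a := Finset.sum_le_sum fun q _ => (hQ q.1 q.2).2
      _ = (e.offDiag.card : ℝ) * a := by rw [Finset.sum_const, nsmul_eq_mul]
      _ ≤ K * a := mul_le_mul_of_nonneg_right (hcardE e he) ha.le
  have hw2 : ∀ e ∈ E, (w e) ^ 2 ≤ K * v e := by
    intro e he
    calc (w e) ^ 2 = (∑ q ∈ e.offDiag, Q q.1 q.2) ^ 2 := rfl
      _ ≤ (e.offDiag.card : ℝ) * ∑ q ∈ e.offDiag, (Q q.1 q.2) ^ 2 := by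
          exact_mod_cast sq_sum_le_card_mul_sum_sq (s := e.offDiag)
            (f := fun q : Fin n × Fin n => Q q.1 q.2)
      _ = (e.offDiag.card : ℝ) * v e := rfl
      _ ≤ K * v e := mul_le_mul_of_nonneg_right (hcardE e he) (hv0 e)
  -- probabilities
  have pe_eq : ∀ e, (μ {ω | T e ω = true}).toReal = p e := fun e => by
    rw [hpT e, ENNReal.toReal_ofReal (hp0 e)]
  -- the variance, x, lambda
  set V : ℝ := ∑ i, ∑ j, (Q i j) ^ 2 * expAdj n M p i j with hVdef
  have hV : 0 < V := hσ
  set x : ℝ := a * t / V with hxdef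
  have hx : 0 < x := div_pos (mul_pos ha ht) hV
  have h1x : (0:ℝ) < 1 + x := by linarith
  set lam : ℝ := Real.log (1 + x) / b with hlamdef
  have hlogpos : 0 < Real.log (1 + x) := Real.log_pos (by linarith)
  have hlam : 0 < lam := div_pos hlogpos hb
  have hlamb : lam * b = Real.log (1 + x) := div_mul_cancel₀ _ hb.ne'
  have hexplamb : Real.exp (lam * b) = 1 + x := by rw [hlamb, Real.exp_log h1x]
  -- the random variables
  set X : Finset (Fin n) → Ω → ℝ := fun e ω => w e * (if T e ω then (1:ℝ) else 0) with hXdef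
  have hXmeas : ∀ e, Measurable (X e) := by
    intro e
    exact (Measurable.of_discrete (f := fun bb : Bool => w e * (if bb then (1:ℝ) else 0))).comp
      (hTmeas e)
  have hXindep : ProbabilityTheory.iIndepFun X μ :=
    hTindep.comp (fun e (bb : Bool) => w e * (if bb then (1:ℝ) else 0))
      (fun _ => Measurable.of_discrete)
  have hXle : ∀ e ω, X e ω ≤ w e := by
    intro e ω
    by_cases h : T e ω <;> simp [hXdef, h, hw0 e]
  have hX0 : ∀ e ω, 0 ≤ X e ω := by
    intro e ω
    by_cases h : T e ω <;> simp [hXdef, h, hw0 e]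
  -- mgf of each X e
  have hmgf : ∀ e, ProbabilityTheory.mgf (X e) μ lam
      = 1 + p e * (Real.exp (lam * w e) - 1) := by
    intro e
    have hAe : MeasurableSet {ω | T e ω = true} := by
      have hrw : {ω | T e ω = true} = T e ⁻¹' {true} := rfl
      rw [hrw]
      exact (hTmeas e) (by trivial)
    have hfun : (fun ω => Real.exp (lam * X e ω))
        = fun ω => Set.indicator {ω | T e ω = true}
            (fun _ => Real.exp (lam * w e) - 1) ω + 1 := by
      funext ω
      by_cases h : T e ω
      · simp [hXdef, h, Set.indicator_apply, Set.mem_setOf_eq]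
      · simp [hXdef, h, Set.indicator_apply, Set.mem_setOf_eq]
    rw [ProbabilityTheory.mgf, hfun, integral_add ((integrable_const _).indicator hAe)
      (integrable_const 1), integral_indicator_const _ hAe, integral_const]
    simp [pe_eq e, smul_eq_mul]
    rw [show μ.real {ω | T e ω = true} = p e from pe_eq e]
    ring
  -- integrability of exp(lam * S)
  have hSapp : (∑ e ∈ E, X e) = fun ω => ∑ e ∈ E, X e ω := by
    funext ω; exact Finset.sum_apply ω E X
  have hSmeas : Measurable (∑ e ∈ E, X e) := by
    rw [hSapp]
    exact Finset.measurable_sum E fun e _ => hXmeas e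
  have h_int : Integrable (fun ω => Real.exp (lam * (∑ e ∈ E, X e) ω)) μ := by
    refine Integrable.mono' (integrable_const (Real.exp (lam * ∑ e ∈ E, w e)))
      ((hSmeas.const_mul lam).exp.aestronglyMeasurable) (ae_of_all μ fun ω => ?_)
    rw [Real.norm_eq_abs, abs_of_pos (Real.exp_pos _), Real.exp_le_exp]
    refine mul_le_mul_of_nonneg_left ?_ hlam.le
    rw [Finset.sum_apply]
    exact Finset.sum_le_sum fun e _ => hXle e ω
  -- Chernoff bound
  have chern := ProbabilityTheory.measure_ge_le_exp_mul_mgf (μ := μ)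
    (X := ∑ e ∈ E, X e) ((∑ i, ∑ j, Q i j * expAdj n M p i j) + t) hlam.le h_int
  rw [ProbabilityTheory.iIndepFun.mgf_sum hXindep hXmeas E] at chern
  -- identify the event
  have hset : {ω | (∑ i, ∑ j, Q i j * expAdj n M p i j) + t ≤
      ∑ i, ∑ j, Q i j * adjMatrix n M T ω i j}
      = {ω | (∑ i, ∑ j, Q i j * expAdj n M p i j) + t ≤ (∑ e ∈ E, X e) ω} := by
    ext ω
    simp only [Set.mem_setOf_eq, hAeq ω, Finset.sum_apply, hXdef]
  -- bound the product of mgfs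
  have hprod : (∏ e ∈ E, ProbabilityTheory.mgf (X e) μ lam)
      ≤ Real.exp (∑ e ∈ E, p e * (Real.exp (lam * w e) - 1)) := by
    rw [Real.exp_sum]
    refine Finset.prod_le_prod (fun e _ => ?_) (fun e _ => ?_)
    · rw [hmgf e]
      have : 1 ≤ Real.exp (lam * w e) := Real.one_le_exp (mul_nonneg hlam.le (hw0 e))
      have := hp0 e
      nlinarith
    · rw [hmgf e, add_comm]
      exact Real.add_one_le_exp _
  -- exponent estimate
  set D : ℝ := Real.exp (lam * b) - 1 - lam * b with hDdef
  have hD0 : 0 ≤ D := by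
    have := Real.add_one_le_exp (lam * b)
    simp only [hDdef]; linarith
  have hterm : ∀ e ∈ E, p e * (Real.exp (lam * w e) - 1)
      ≤ p e * (lam * w e) + p e * (v e / (K * a ^ 2)) * D := by
    intro e he
    have hy : 0 ≤ lam * w e := mul_nonneg hlam.le (hw0 e)
    have hyz : lam * w e ≤ lam * b := mul_le_mul_of_nonneg_left (hwK e he) hlam.le
    have hkey := key_ineq hy hyz
    have hratio : (lam * w e) ^ 2 / (lam * b) ^ 2 ≤ v e / (K * a ^ 2) := by
      have hlb2 : (0:ℝ) < (lam * b) ^ 2 := by positivity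
      rw [div_le_div_iff₀ hlb2 (by positivity)]
      have h2 := hw2 e he
      have h3 : (lam * w e) ^ 2 * (K * a ^ 2) = lam ^ 2 * a ^ 2 * (K * (w e) ^ 2) := by ring
      have h4 : v e * (lam * b) ^ 2 = lam ^ 2 * a ^ 2 * (K * (K * v e)) := by
        rw [hbdef]; ring
      rw [h3, h4]
      exact mul_le_mul_of_nonneg_left (mul_le_mul_of_nonneg_left h2 hK.le) (by positivity)
    have hmain : Real.exp (lam * w e) - 1 - lam * w e ≤ v e / (K * a ^ 2) * D := by
      refine hkey.trans ?_
      exact mul_le_mul_of_nonneg_right hratio hD0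
    have hpe := hp0 e
    calc p e * (Real.exp (lam * w e) - 1)
        = p e * (Real.exp (lam * w e) - 1 - lam * w e) + p e * (lam * w e) := by ring
      _ ≤ p e * (v e / (K * a ^ 2) * D) + p e * (lam * w e) :=
          add_le_add_left (mul_le_mul_of_nonneg_left hmain hpe) _
      _ = p e * (lam * w e) + p e * (v e / (K * a ^ 2)) * D := by ring
  have hsum_le : ∑ e ∈ E, p e * (Real.exp (lam * w e) - 1)
      ≤ lam * (∑ e ∈ E, w e * p e) + V / (K * a ^ 2) * D := by
    calc ∑ e ∈ E, p e * (Real.exp (lam * w e) - 1)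
        ≤ ∑ e ∈ E, (p e * (lam * w e) + p e * (v e / (K * a ^ 2)) * D) :=
          Finset.sum_le_sum hterm
      _ = (∑ e ∈ E, p e * (lam * w e)) + ∑ e ∈ E, p e * (v e / (K * a ^ 2)) * D :=
          Finset.sum_add_distrib
      _ = lam * (∑ e ∈ E, w e * p e) + V / (K * a ^ 2) * D := by
          have e1 : (∑ e ∈ E, p e * (lam * w e)) = lam * ∑ e ∈ E, w e * p e := by
            rw [Finset.mul_sum]
            exact Finset.sum_congr rfl fun e _ => by ring
          have e2 : (∑ e ∈ E, p e * (v e / (K * a ^ 2)) * D) = V / (K * a ^ 2) * D := by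
            rw [hVeq, Finset.sum_div, Finset.sum_mul]
            exact Finset.sum_congr rfl fun e _ => by ring
          rw [e1, e2]
  -- final exponent computation
  have hfinal : Real.exp (-lam * ((∑ i, ∑ j, Q i j * expAdj n M p i j) + t)) *
      Real.exp (∑ e ∈ E, p e * (Real.exp (lam * w e) - 1))
      ≤ Real.exp (-(V / (K * a ^ 2) * bennettH x)) := by
    rw [← Real.exp_add, Real.exp_le_exp]
    have hμE := hμeq
    have step : -lam * ((∑ i, ∑ j, Q i j * expAdj n M p i j) + t)
        + ∑ e ∈ E, p e * (Real.exp (lam * w e) - 1)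
        ≤ -lam * t + V / (K * a ^ 2) * D := by
      rw [hμE]
      have := hsum_le
      linarith [hsum_le]
    refine step.trans (le_of_eq ?_)
    have hDx : D = x - Real.log (1 + x) := by
      rw [hDdef, hexplamb, hlamb]; ring
    have ht_eq : t = x * V / a := by
      rw [hxdef]; field_simp
    rw [hDx, ht_eq, hlamdef, bennettH, hbdef]
    field_simp
    ring
  -- put everything together
  rw [hset]
  have hne : μ {ω | (∑ i, ∑ j, Q i j * expAdj n M p i j) + t ≤ (∑ e ∈ E, X e) ω} ≠ ⊤ :=
    measure_ne_top μ _
  rw [← ENNReal.ofReal_toReal hne]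
  refine ENNReal.ofReal_le_ofReal ?_
  refine chern.trans ?_
  calc Real.exp (-lam * ((∑ i, ∑ j, Q i j * expAdj n M p i j) + t)) *
        ∏ e ∈ E, ProbabilityTheory.mgf (X e) μ lam
      ≤ Real.exp (-lam * ((∑ i, ∑ j, Q i j * expAdj n M p i j) + t)) *
        Real.exp (∑ e ∈ E, p e * (Real.exp (lam * w e) - 1)) :=
        mul_le_mul_of_nonneg_left hprod (Real.exp_pos _).le
    _ ≤ Real.exp (-(V / (K * a ^ 2) * bennettH x)) := hfinal
    _ = Real.exp (-(V / ((M:ℝ) * ((M:ℝ) - 1) * a ^ 2) * bennettH (a * t / V))) := by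
        rw [hKdef, hxdef]
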